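/- Let R be a finite-dimensional G-graded K-algebra over a field K, with G a finite group and grading R = ⊕_{g∈G} R_g where each component has dimension 1 and the product of nonzero homogeneous elements is nonzero. Let 0 ≠ f ∈ R with support S = supp(f) ⊆ G (the set of g with nonzero g-component). If there exists a sequence g_1,...,g_t in G of right S-rank t, then dim_K(f·R) ≥ t. -/

import Mathlib

open Pointwise

/-- A sequence `g 0, …, g (t-1)` in `G` has right `S`-rank `t` if for every
`i ≥ 1` (i.e. the 2nd through `t`-th terms), `S · g i` is not contained in
`⋃_{j < i} S · g j`. -/
def RightSRankSeq {G : Type*} [Group G] (S : Set G) {t : ℕ} (g : Fin t → G) : Prop :=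
  ∀ i : Fin t, 0 < (i : ℕ) →
    ¬ (S * {g i} ⊆ ⋃ j : Fin t, ⋃ (_ : (j : ℕ) < (i : ℕ)), S * {g j})

lemma key14 {K R G : Type*} [Field K] [Ring R] [Algebra K R] [Group G] [Fintype G]
    (b : Module.Basis G K R)
    (hmul : ∀ g h : G, ∃ c : Kˣ, b g * b h = (c : K) • b (g * h))
    (f : R) (h : G) (x : G) :
    ∃ c : Kˣ, b.repr (f * b h) x = b.repr f (x * h⁻¹) * c := by
  classical
  choose c hc using fun s => hmul s h
  refine ⟨c (x * h⁻¹), ?_⟩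
  conv_lhs => rw [← b.sum_repr f, Finset.sum_mul]
  simp only [smul_mul_assoc, hc, map_sum, smul_smul, map_smul, Module.Basis.repr_self,
    Finsupp.coe_finset_sum, Finset.sum_apply, Finsupp.smul_apply, smul_eq_mul]
  rw [Finset.sum_eq_single (x * h⁻¹)]
  · rw [Finsupp.single_apply]
    have : x * h⁻¹ * h = x := by group
    rw [if_pos this, mul_one]
  · intro s _ hs
    rw [Finsupp.single_apply, if_neg, mul_zero]
    intro hsh
    exact hs (by rw [← hsh]; group)
  · intro hx; exact absurd (Finset.mem_univ _) hx

lemma supp14 {K R G : Type*} [Field K] [Ring R] [Algebra K R] [Group G] [Fintype G]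
    (b : Module.Basis G K R)
    (hmul : ∀ g h : G, ∃ c : Kˣ, b g * b h = (c : K) • b (g * h))
    (f : R) (h : G) (x : G) :
    b.repr (f * b h) x ≠ 0 ↔ x ∈ {x : G | b.repr f x ≠ 0} * {h} := by
  obtain ⟨c, hc⟩ := key14 b hmul f h x
  rw [hc, Set.mul_singleton]
  constructor
  · intro hne
    exact ⟨x * h⁻¹, by simpa using left_ne_zero_of_mul hne, by group⟩
  · rintro ⟨s, hs, rfl⟩
    have : s * h * h⁻¹ = s := by group
    rw [this]
    exact mul_ne_zero hs c.ne_zero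

/-- A `G`-graded `K`-algebra `R` whose homogeneous components are one-dimensional
and in which products of nonzero homogeneous elements are nonzero is presented by
a basis `b : G → R` together with `b g * b h = c • b (g*h)` for units `c`.
For `f ∈ R`, its support is `{g | b.repr f g ≠ 0}`, and if there is a sequence of
right `S`-rank `t` for `S = supp f`, then `dim_K (f · R) ≥ t`. -/
theorem stmt14 {K R G : Type*} [Field K] [Ring R] [Algebra K R] [Group G] [Finite G]
    (b : Module.Basis G K R)
    (hmul : ∀ g h : G, ∃ c : Kˣ, b g * b h = (c : K) • b (g * h))
    (f : R) (hf : f ≠ 0)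
    {t : ℕ} (g : Fin t → G)
    (hrank : RightSRankSeq {x : G | b.repr f x ≠ 0} g) :
    t ≤ Module.finrank K (Submodule.span K {y : R | ∃ r : R, y = f * r}) := by
  classical
  haveI := Fintype.ofFinite G
  haveI : Module.Finite K R := Module.Finite.of_basis b
  set S : Set G := {x : G | b.repr f x ≠ 0} with hS
  set v : Fin t → R := fun i => f * b (g i) with hv
  -- linear independence of v
  have hli : LinearIndependent K v := by
    rw [Fintype.linearIndependent_iff]
    intro a ha
    by_contra hne
    push_neg at hne
    obtain ⟨i0, hi0⟩ := hne
    set T : Finset (Fin t) := Finset.univ.filter (fun i => a i ≠ 0) with hT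
    have hTne : T.Nonempty := ⟨i0, by simp [hT, hi0]⟩
    set i := T.max' hTne with hi
    have hiT : i ∈ T := T.max'_mem hTne
    have hai : a i ≠ 0 := by simpa [hT] using hiT
    -- find x in S * {g i} avoiding S * {g j} for j < i
    have : ∃ x : G, x ∈ S * {g i} ∧ ∀ j : Fin t, (j : ℕ) < (i : ℕ) → x ∉ S * {g j} := by
      rcases Nat.eq_zero_or_pos (i : ℕ) with h0 | hpos
      · obtain ⟨s, hsS⟩ : S.Nonempty := by
          by_contra hemp
          rw [Set.not_nonempty_iff_eq_empty] at hemp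
          apply hf
          apply b.repr.injective
          ext x
          have := Set.eq_empty_iff_forall_notMem.mp hemp x
          simpa [hS] using this
        exact ⟨s * g i, Set.mul_mem_mul hsS rfl, fun j hj => absurd (hj.trans_le (le_of_eq h0)) (by omega)⟩
      · have := hrank i hpos
        rw [Set.not_subset] at this
        obtain ⟨x, hx1, hx2⟩ := this
        refine ⟨x, hx1, fun j hj hxj => hx2 ?_⟩
        exact Set.mem_iUnion.mpr ⟨j, Set.mem_iUnion.mpr ⟨hj, hxj⟩⟩
    obtain ⟨x, hxi, hxlt⟩ := this
    have hrepr : b.repr (∑ j, a j • v j) x = 0 := by rw [ha]; simp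
    rw [map_sum] at hrepr
    simp only [map_smul, Finsupp.coe_finset_sum, Finset.sum_apply, Finsupp.smul_apply,
      smul_eq_mul] at hrepr
    rw [Finset.sum_eq_single i] at hrepr
    · exact hai (by
        have hvx : b.repr (v i) x ≠ 0 := (supp14 b hmul f (g i) x).mpr hxi
        exact (mul_eq_zero.mp hrepr).resolve_right hvx)
    · intro j _ hji
      rcases lt_or_gt_of_ne (fun h : (j : ℕ) = (i : ℕ) => hji (Fin.ext h)) with hlt | hgt
      · have : b.repr (v j) x = 0 := by
          by_contra hne'
          exact hxlt j hlt ((supp14 b hmul f (g j) x).mp hne')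
        rw [this, mul_zero]
      · have haj : a j = 0 := by
          by_contra hne'
          have : j ∈ T := by simp [hT, hne']
          have := T.le_max' j this
          omega
        rw [haj, zero_mul]
    · intro hi'; exact absurd (Finset.mem_univ _) hi'
  -- v i lies in the span
  have hmem : ∀ i, v i ∈ Submodule.span K {y : R | ∃ r : R, y = f * r} :=
    fun i => Submodule.subset_span ⟨b (g i), rfl⟩
  set w : Fin t → Submodule.span K {y : R | ∃ r : R, y = f * r} :=
    fun i => ⟨v i, hmem i⟩ with hw
  have hliw : LinearIndependent K w := by
    apply LinearIndependent.of_comp (Submodule.span K {y : R | ∃ r : R, y = f * r}).subtype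
    convert hli
    rfl
  simpa using hliw.fintype_card_le_finrank
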